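/- Let m, t, d be natural numbers and X•, Y• bounded complexes of Λ-modules with X^i = 0 for i < m, Y^j = 0 for j > t, and Ext^l_F(X^i, Y^j) = 0 for all i, j and all l ≥ d. Then Hom_{D_F^b(Λ)}(X•, Y•[l]) = 0 for all l ≥ d + t − m. -/

import Mathlib

open CategoryTheory CategoryTheory.Limits CategoryTheory.Category

universe w v u v' u'

namespace RelDer

variable {𝒜 : Type u} [Category.{v} 𝒜] [Abelian 𝒜]

/-- `g` is an `F`-epimorphism: it fits into an `F`-exact short exact sequence. -/
def FEpi (F : ShortComplex 𝒜 → Prop) {B C : 𝒜} (g : B ⟶ C) : Prop :=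
  ∃ (K : 𝒜) (k : K ⟶ B) (w : k ≫ g = 0), F (ShortComplex.mk k g w)

/-- `f` is an `F`-monomorphism. -/
def FMono (F : ShortComplex 𝒜 → Prop) {A B : 𝒜} (f : A ⟶ B) : Prop :=
  ∃ (C : 𝒜) (g : B ⟶ C) (w : f ≫ g = 0), F (ShortComplex.mk f g w)

/-- `P` is `F`-projective: `Hom(P,-)` sends `F`-exact sequences to exact sequences. -/
def FProjective (F : ShortComplex 𝒜 → Prop) (P : 𝒜) : Prop :=
  ∀ (S : ShortComplex 𝒜), F S → ∀ (p : P ⟶ S.X₃), ∃ q : P ⟶ S.X₂, q ≫ S.g = p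

/-- `I` is `F`-injective. -/
def FInjective (F : ShortComplex 𝒜 → Prop) (I : 𝒜) : Prop :=
  ∀ (S : ShortComplex 𝒜), F S → ∀ (p : S.X₁ ⟶ I), ∃ q : S.X₂ ⟶ I, S.f ≫ q = p

/-- `F` has enough projectives. -/
def HasEnoughFProjectives (F : ShortComplex 𝒜 → Prop) : Prop :=
  ∀ M : 𝒜, ∃ (P : 𝒜) (g : P ⟶ M), FProjective F P ∧ FEpi F g

/-- `F` has enough injectives. -/
def HasEnoughFInjectives (F : ShortComplex 𝒜 → Prop) : Prop :=
  ∀ M : 𝒜, ∃ (I : 𝒜) (f : M ⟶ I), FInjective F I ∧ FMono F f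

lemma image_ι_comp_d (X : CochainComplex 𝒜 ℤ) (i : ℤ) :
    image.ι (X.d (i-1) i) ≫ X.d i (i+1) = 0 := by
  rw [← cancel_epi (factorThruImage (X.d (i-1) i)), image.fac_assoc,
    HomologicalComplex.d_comp_d, comp_zero]

/-- The short complex `Im d^{i-1} → X^i → Im d^i` associated to a cochain complex. -/
noncomputable def imagesShortComplex (X : CochainComplex 𝒜 ℤ) (i : ℤ) : ShortComplex 𝒜 :=
  ShortComplex.mk (image.ι (X.d (i-1) i)) (factorThruImage (X.d i (i+1)))
    (by rw [← cancel_mono (image.ι (X.d i (i+1))), assoc, image.fac, zero_comp,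
      image_ι_comp_d])

/-- A complex is `F`-acyclic if each `0 → Im d^{i-1} → X^i → Im d^i → 0` is `F`-exact. -/
def FAcyclic (F : ShortComplex 𝒜 → Prop) (X : CochainComplex 𝒜 ℤ) : Prop :=
  ∀ i : ℤ, F (imagesShortComplex X i)

/-- A chain map is an `F`-quasi-isomorphism if its mapping cone is `F`-acyclic. -/
def FQuasiIso (F : ShortComplex 𝒜 → Prop) {X Y : CochainComplex 𝒜 ℤ} (f : X ⟶ Y) : Prop :=
  FAcyclic F (CochainComplex.mappingCone f)

def BoundedAbove (X : CochainComplex 𝒜 ℤ) : Prop :=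
  ∃ n : ℤ, ∀ i, n < i → IsZero (X.X i)

def Bounded (X : CochainComplex 𝒜 ℤ) : Prop :=
  ∃ a b : ℤ, ∀ i, (i < a ∨ b < i) → IsZero (X.X i)

/-- An equivalence of (pre)triangulated categories. -/
structure TriangleEquivalence (C : Type u) (D : Type u') [Category.{v} C] [Category.{v'} D]
    [HasShift C ℤ] [HasShift D ℤ] [Preadditive C] [Preadditive D]
    [HasZeroObject C] [HasZeroObject D]
    [∀ n : ℤ, (shiftFunctor C n).Additive] [∀ n : ℤ, (shiftFunctor D n).Additive]
    [Pretriangulated C] [Pretriangulated D] where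
  e : C ≌ D
  commShift : e.functor.CommShift ℤ
  isTriangulated : letI := commShift; e.functor.IsTriangulated

/-- Two maps are stably equal if their difference factors through an object satisfying `P`. -/
def stableHomRel (P : 𝒜 → Prop) : HomRel 𝒜 := fun {X Y} f g =>
  ∃ (Z : 𝒜) (_ : P Z) (a : X ⟶ Z) (b : Z ⟶ Y), f - g = a ≫ b

/-- The stable category of `𝒜` modulo objects satisfying `P`. -/
abbrev StableCategory (P : 𝒜 → Prop) := CategoryTheory.Quotient (stableHomRel P)

/-- The complex `Hom(P^•, Y)` of abelian groups, whose homology computes relative Ext. -/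
noncomputable def homComplex (P : CochainComplex 𝒜 ℤ) (Y : 𝒜) :
    HomologicalComplex AddCommGrpCat (ComplexShape.up ℤ).symm :=
  ((preadditiveYoneda.obj Y).mapHomologicalComplex (ComplexShape.up ℤ).symm).obj P.op

/-- The relative Ext group `Ext^i_F(X,Y)` computed from an `F`-projective resolution `P` of
`X` as the `i`-th cohomology of `Hom(P^•,Y)`. -/
noncomputable def extFGroup (P : CochainComplex 𝒜 ℤ) (Y : 𝒜) (i : ℤ) : AddCommGrpCat :=
  (homComplex P Y).homology (-i)

/-- `P`, together with the augmentation `ε`, is an `F`-projective resolution of `X`. -/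
def IsFProjResolution (F : ShortComplex 𝒜 → Prop) (X : 𝒜) (P : CochainComplex 𝒜 ℤ)
    (ε : P ⟶ (CochainComplex.singleFunctor 𝒜 0).obj X) : Prop :=
  (∀ i : ℤ, 0 < i → IsZero (P.X i)) ∧ (∀ i : ℤ, FProjective F (P.X i)) ∧ FQuasiIso F ε

/-- `X` has `F`-projective dimension at most `m`. -/
def FProjDimLe (F : ShortComplex 𝒜 → Prop) (X : 𝒜) (m : ℕ) : Prop :=
  ∃ (P : CochainComplex 𝒜 ℤ) (ε : P ⟶ (CochainComplex.singleFunctor 𝒜 0).obj X),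
    IsFProjResolution F X P ε ∧ ∀ i : ℤ, i < -(m : ℤ) → IsZero (P.X i)

/-- `I`, together with the augmentation `ε`, is an `F`-injective coresolution of `X`. -/
def IsFInjCoresolution (F : ShortComplex 𝒜 → Prop) (X : 𝒜) (I : CochainComplex 𝒜 ℤ)
    (ε : (CochainComplex.singleFunctor 𝒜 0).obj X ⟶ I) : Prop :=
  (∀ i : ℤ, i < 0 → IsZero (I.X i)) ∧ (∀ i : ℤ, FInjective F (I.X i)) ∧ FQuasiIso F ε

/-- `X` has `F`-injective dimension at most `m`. -/
def FInjDimLe (F : ShortComplex 𝒜 → Prop) (X : 𝒜) (m : ℕ) : Prop :=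
  ∃ (I : CochainComplex 𝒜 ℤ) (ε : (CochainComplex.singleFunctor 𝒜 0).obj X ⟶ I),
    IsFInjCoresolution F X I ε ∧ ∀ i : ℤ, (m : ℤ) < i → IsZero (I.X i)

/-- The `F`-projective dimension of `X`, valued in `ℕ∞`. -/
noncomputable def FProjDim (F : ShortComplex 𝒜 → Prop) (X : 𝒜) : ℕ∞ :=
  sInf {n : ℕ∞ | ∃ m : ℕ, n = m ∧ FProjDimLe F X m}

/-- The `F`-injective dimension of `X`, valued in `ℕ∞`. -/
noncomputable def FInjDim (F : ShortComplex 𝒜 → Prop) (X : 𝒜) : ℕ∞ :=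
  sInf {n : ℕ∞ | ∃ m : ℕ, n = m ∧ FInjDimLe F X m}

/-- The `F`-global dimension. -/
noncomputable def FGlobalDim (F : ShortComplex 𝒜 → Prop) : ℕ∞ :=
  ⨆ X : 𝒜, FProjDim F X

/-- The `F`-finitistic dimension. -/
noncomputable def FFinitisticDim (F : ShortComplex 𝒜 → Prop) : ℕ∞ :=
  ⨆ X : {X : 𝒜 // FProjDim F X ≠ ⊤}, FProjDim F X.1

/-- The class of all short exact sequences: the absolute (non-relative) exact structure. -/
def allExact : ShortComplex 𝒜 → Prop := fun S => S.ShortExact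

/-- `M` belongs to `add G`. -/
def InAdd (G M : 𝒜) : Prop :=
  haveI : HasFiniteBiproducts 𝒜 := Abelian.hasFiniteBiproducts
  ∃ (n : ℕ) (N : 𝒜), Nonempty ((M ⊞ N) ≅ (⨁ fun _ : Fin n => G))

namespace Triangulated

open Pretriangulated in
structure Subcategory (C : Type u') [Category.{v'} C] [HasZeroObject C] [HasShift C ℤ]
    [Preadditive C] [∀ n : ℤ, (shiftFunctor C n).Additive] [Pretriangulated C] where
  P : C → Prop
  zero' : ∃ (Z : C) (_ : IsZero Z), P Z
  shift (X : C) (n : ℤ) : P X → P (X⟦n⟧)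
  ext₂' (T : Triangle C) (_ : T ∈ distTriang C) : P T.obj₁ → P T.obj₃ →
    ObjectProperty.isoClosure P T.obj₂

open Pretriangulated in
def Subcategory.W {C : Type u'} [Category.{v'} C] [HasZeroObject C] [HasShift C ℤ]
    [Preadditive C] [∀ n : ℤ, (shiftFunctor C n).Additive] [Pretriangulated C]
    (S : Subcategory C) : MorphismProperty C :=
  fun X Y f => ∃ (Z : C) (g : Y ⟶ Z) (h : Z ⟶ X⟦(1 : ℤ)⟧)
    (_ : Triangle.mk f g h ∈ distTriang C), S.P Z

end Triangulated

/-- `T` generates the objects satisfying `Gen` as a triangulated category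
(closed under isomorphisms and retracts/direct summands). -/
def Generates {𝒯 : Type u'} [Category.{v'} 𝒯] [HasZeroObject 𝒯] [HasShift 𝒯 ℤ]
    [Preadditive 𝒯] [∀ n : ℤ, (shiftFunctor 𝒯 n).Additive] [Pretriangulated 𝒯]
    (T : 𝒯) (Gen : 𝒯 → Prop) : Prop :=
  ∀ (S : Triangulated.Subcategory 𝒯),
    (∀ X Y : 𝒯, (X ≅ Y) → S.P X → S.P Y) →
    (∀ X Y : 𝒯, (∃ (r : X ⟶ Y) (s : Y ⟶ X), s ≫ r = 𝟙 Y) → S.P X → S.P Y) →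
    S.P T → ∀ X : 𝒯, Gen X → S.P X


open ZeroObject

section Aux

lemma hom_zero_of_iso {C : Type*} [Category C] [Limits.HasZeroMorphisms C]
    {P P' T T' : C} (e₁ : P ≅ P') (e₂ : T ≅ T')
    (hv : ∀ h : P' ⟶ T', h = 0) : ∀ h : P ⟶ T, h = 0 := fun h => by
  have h1 : e₁.inv ≫ h ≫ e₂.hom = 0 := hv _
  have h2 : h = e₁.hom ≫ (e₁.inv ≫ h ≫ e₂.hom) ≫ e₂.inv := by simp
  rw [h2, h1, zero_comp, comp_zero]

lemma hom_zero_of_shift {D : Type*} [Category D] [Preadditive D] [HasShift D ℤ]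
    [∀ n : ℤ, (shiftFunctor D n).Additive] {P T : D} (k : ℤ)
    (hv : ∀ g : P⟦k⟧ ⟶ T⟦k⟧, g = 0) : ∀ h : P ⟶ T, h = 0 := fun h => by
  apply (shiftFunctor D k).map_injective
  rw [hv ((shiftFunctor D k).map h), Functor.map_zero]

variable (X : CochainComplex 𝒜 ℤ) (n : ℤ)

/-- The stupid truncation `σ_{≥ n} X`. -/
noncomputable def strunc : CochainComplex 𝒜 ℤ where
  X i := if n ≤ i then X.X i else 0
  d i j :=
    if h : n ≤ i ∧ n ≤ j then eqToHom (if_pos h.1) ≫ X.d i j ≫ eqToHom (if_pos h.2).symm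
    else 0
  shape i j h := by
    by_cases hc : n ≤ i ∧ n ≤ j
    · rw [dif_pos hc, X.shape i j h, zero_comp, comp_zero]
    · rw [dif_neg hc]
  d_comp_d' i j k _ _ := by
    by_cases h1 : n ≤ i ∧ n ≤ j
    · by_cases h2 : n ≤ j ∧ n ≤ k
      · rw [dif_pos h1, dif_pos h2]
        simp
      · rw [dif_pos h1, dif_neg h2, comp_zero]
    · rw [dif_neg h1, zero_comp]

lemma strunc_X (i : ℤ) : (strunc X n).X i = if n ≤ i then X.X i else 0 := rfl

lemma strunc_d (i j : ℤ) : (strunc X n).d i j =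
    if h : n ≤ i ∧ n ≤ j then eqToHom (if_pos h.1) ≫ X.d i j ≫ eqToHom (if_pos h.2).symm
    else 0 := rfl

lemma strunc_isZero (i : ℤ) (hi : i < n) : IsZero ((strunc X n).X i) := by
  rw [IsZero.iff_id_eq_zero]
  have : (strunc X n).X i = (0 : 𝒜) := (strunc_X X n i).trans (if_neg (by omega))
  rw [← IsZero.iff_id_eq_zero]
  exact (isZero_zero 𝒜).of_iso (eqToIso this)

lemma strunc_isZero' (i : ℤ) (hi : IsZero (X.X i)) : IsZero ((strunc X n).X i) := by
  by_cases h : n ≤ i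
  · exact hi.of_iso (eqToIso ((strunc_X X n i).trans (if_pos h)))
  · exact strunc_isZero X n i (by omega)

noncomputable def struncXIso (i : ℤ) (hi : n ≤ i) : (strunc X n).X i ≅ X.X i :=
  eqToIso ((strunc_X X n i).trans (if_pos hi))

noncomputable def struncι : strunc X n ⟶ X where
  f i := if hi : n ≤ i then (struncXIso X n i hi).hom else 0
  comm' i j hij := by
    have hij' : i + 1 = j := hij
    by_cases hi : n ≤ i
    · have hj : n ≤ j := by omega
      rw [strunc_d, dif_pos hi, dif_pos hj, dif_pos (show n ≤ i ∧ n ≤ j from ⟨hi, hj⟩)]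
      simp only [struncXIso, eqToIso.hom]
      erw [assoc, assoc, eqToHom_trans, eqToHom_refl, comp_id]
      rfl
    · rw [strunc_d, dif_neg hi, dif_neg (show ¬ (n ≤ i ∧ n ≤ j) from fun h => hi h.1),
        zero_comp]
      exact zero_comp.symm

lemma struncι_f (i : ℤ) (hi : n ≤ i) :
    (struncι X n).f i = (struncXIso X n i hi).hom := dif_pos hi

lemma struncι_f' (i : ℤ) (hi : ¬ n ≤ i) : (struncι X n).f i = 0 := dif_neg hi

noncomputable def struncπ (hlow : ∀ i, i < n → IsZero (X.X i)) :
    X ⟶ (HomologicalComplex.single 𝒜 (ComplexShape.up ℤ) n).obj (X.X n) :=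
  HomologicalComplex.mkHomToSingle (𝟙 _) (fun i hi =>
    (hlow i (by simp only [ComplexShape.up_Rel] at hi; omega)).eq_of_src _ _)

noncomputable def sesTrunc (hlow : ∀ i, i < n → IsZero (X.X i)) :
    ShortComplex (CochainComplex 𝒜 ℤ) :=
  ShortComplex.mk (struncι X (n + 1)) (struncπ X n hlow) (by
    apply HomologicalComplex.hom_ext
    intro i
    rw [HomologicalComplex.comp_f, HomologicalComplex.zero_f]
    by_cases hi : i = n
    · rw [struncι_f' X (n + 1) i (by omega), zero_comp]
    · exact (HomologicalComplex.isZero_single_obj_X _ _ _ _ hi).eq_of_tgt _ _)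

noncomputable def sesTruncSplitting (hlow : ∀ i, i < n → IsZero (X.X i)) (p : ℤ) :
    ((sesTrunc X n hlow).map (HomologicalComplex.eval 𝒜 _ p)).Splitting where
  r := if h : n + 1 ≤ p then (struncXIso X (n + 1) p h).inv else 0
  s := if h : p = n then
      (HomologicalComplex.singleObjXIsoOfEq (ComplexShape.up ℤ) n (X.X n) p h).hom ≫
        eqToHom (congrArg X.X h.symm) else 0
  f_r := by
    dsimp only [sesTrunc, ShortComplex.map, HomologicalComplex.eval]
    by_cases h : n + 1 ≤ p
    · erw [dif_pos h, struncι_f X (n + 1) p h, Iso.hom_inv_id]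
    · exact (strunc_isZero X (n + 1) p (by omega)).eq_of_src _ _
  s_g := by
    dsimp only [sesTrunc, ShortComplex.map, HomologicalComplex.eval]
    by_cases h : p = n
    · subst h
      erw [dif_pos rfl]
      dsimp only [struncπ]
      rw [HomologicalComplex.mkHomToSingle_f]
      simp [HomologicalComplex.singleObjXSelf, HomologicalComplex.singleObjXIsoOfEq]
    · exact (HomologicalComplex.isZero_single_obj_X _ _ _ _ h).eq_of_src _ _
  id := by
    dsimp only [sesTrunc, ShortComplex.map, HomologicalComplex.eval]
    by_cases h : n + 1 ≤ p
    · erw [dif_pos h, dif_neg (by omega : ¬ p = n), comp_zero, add_zero,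
        struncι_f X (n + 1) p h, Iso.inv_hom_id]
    · by_cases h' : p = n
      · erw [dif_neg (by omega : ¬ n + 1 ≤ p), dif_pos h', zero_comp, zero_add]
        subst h'
        dsimp only [struncπ]
        rw [HomologicalComplex.mkHomToSingle_f]
        simp [HomologicalComplex.singleObjXSelf, HomologicalComplex.singleObjXIsoOfEq]
      · exact (hlow p (by omega)).eq_of_src _ _

end Aux

section Devissage

universe u₁ v₁

variable {DF : Type u₁} [Category.{v₁} DF] [HasZeroObject DF] [HasShift DF ℤ]
    [Preadditive DF] [∀ n : ℤ, (shiftFunctor DF n).Additive] [Pretriangulated DF]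
    (L : HomotopyCategory 𝒜 (ComplexShape.up ℤ) ⥤ DF) [L.CommShift ℤ] [L.IsTriangulated]

lemma isZero_of_components (W : CochainComplex 𝒜 ℤ) (h : ∀ i, IsZero (W.X i)) :
    IsZero W := by
  rw [IsZero.iff_id_eq_zero]
  apply HomologicalComplex.hom_ext
  intro i
  exact (h i).eq_of_src _ _

lemma LQ_isZero (W : CochainComplex 𝒜 ℤ) (hW : IsZero W) :
    IsZero (L.obj ((HomotopyCategory.quotient 𝒜 (ComplexShape.up ℤ)).obj W)) :=
  L.map_isZero ((HomotopyCategory.quotient 𝒜 (ComplexShape.up ℤ)).map_isZero hW)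

/-- `single_i A ≅ (single_0 A)⟦-i⟧` transported through `L ∘ Q`. -/
noncomputable def LQsingle (A : 𝒜) (i : ℤ) :
    L.obj ((HomotopyCategory.quotient 𝒜 (ComplexShape.up ℤ)).obj
      ((CochainComplex.singleFunctor 𝒜 i).obj A)) ≅
    (L.obj ((HomotopyCategory.quotient 𝒜 (ComplexShape.up ℤ)).obj
      ((CochainComplex.singleFunctor 𝒜 0).obj A)))⟦(-i : ℤ)⟧ :=
  L.mapIso ((HomotopyCategory.quotient 𝒜 (ComplexShape.up ℤ)).mapIso
      ((((CochainComplex.singleFunctors 𝒜).shiftIso (-i) i 0 (by omega)).app A).symm)) ≪≫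
    L.mapIso (((HomotopyCategory.quotient 𝒜 (ComplexShape.up ℤ)).commShiftIso (-i)).app
      ((CochainComplex.singleFunctor 𝒜 0).obj A)) ≪≫
    (L.commShiftIso (-i)).app _

/-- Devissage in the second variable. -/
lemma yside (P : DF) (c : ℤ) (n : ℕ) :
    ∀ (Y' : CochainComplex 𝒜 ℤ) (b : ℤ),
      (∀ j, j < b → IsZero (Y'.X j)) → (∀ j, b + n ≤ j → IsZero (Y'.X j)) →
      (∀ (j l : ℤ), c ≤ l →
        ∀ h : P ⟶ (L.obj ((HomotopyCategory.quotient 𝒜 (ComplexShape.up ℤ)).obj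
            ((CochainComplex.singleFunctor 𝒜 j).obj (Y'.X j))))⟦l⟧, h = 0) →
      ∀ (l : ℤ), c ≤ l →
        ∀ h : P ⟶ (L.obj ((HomotopyCategory.quotient 𝒜 (ComplexShape.up ℤ)).obj Y'))⟦l⟧,
          h = 0 := by
  induction n with
  | zero =>
    intro Y' b hs1 hs2 hyp l hl h
    refine ((shiftFunctor DF l).map_isZero (LQ_isZero L Y' (isZero_of_components Y'
      (fun i => ?_)))).eq_of_tgt _ _
    rcases lt_or_ge i b with hi | hi
    · exact hs1 i hi
    · exact hs2 i (by omega)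
  | succ n ih =>
    intro Y' b hs1 hs2 hyp l hl h
    have hdist := (HomotopyCategory.distinguished_iff_iso_trianglehOfDegreewiseSplit _).2
      ⟨sesTrunc Y' b hs1, sesTruncSplitting Y' b hs1, ⟨Iso.refl _⟩⟩
    have hT := L.map_distinguished _ hdist
    set T := L.mapTriangle.obj (CochainComplex.trianglehOfDegreewiseSplit
      (sesTrunc Y' b hs1) (sesTruncSplitting Y' b hs1)) with hTdef
    -- adjunction `⟦-l⟧ ⊣ ⟦l⟧`
    let adj := (shiftEquiv DF (-l)).toAdjunction
    have hadj_zero : ∀ (B : DF), (adj.homEquiv P B).symm 0 = 0 := fun B => by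
      rw [Adjunction.homEquiv_counit, Functor.map_zero, zero_comp]
    have hadj_zero' : ∀ (B : DF) (g : P⟦(-l : ℤ)⟧ ⟶ B)
        (hg : adj.homEquiv P B g = 0), g = 0 := fun B g hg => by
      have := congrArg (adj.homEquiv P B).symm hg
      erw [Equiv.symm_apply_apply, hadj_zero] at this
      exact this
    have hll : - -l = l := by omega
    have shift_eq : ∀ (B : DF), ((shiftEquiv DF (-l)).inverse.obj B : DF) = B⟦l⟧ := by
      intro B; rw [shiftEquiv'_inverse, hll]
    let h₀ : P⟦(-l : ℤ)⟧ ⟶ T.obj₂ :=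
      (adj.homEquiv P T.obj₂).symm (h ≫ eqToHom (shift_eq T.obj₂).symm)
    have hcomp : h₀ ≫ T.mor₂ = 0 := by
      apply hadj_zero' _ _
      erw [Adjunction.homEquiv_naturality_right]
      have h1 : adj.homEquiv P T.obj₂ h₀ = h ≫ eqToHom (shift_eq T.obj₂).symm :=
        (adj.homEquiv P T.obj₂).apply_symm_apply _
      rw [h1]
      have : (h ≫ eqToHom (shift_eq T.obj₂).symm) ≫
          (shiftEquiv DF (-l)).inverse.map T.mor₂ ≫ eqToHom (shift_eq T.obj₃) = 0 := by
        apply hyp b l hl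
      rw [← cancel_mono (eqToHom (shift_eq T.obj₃)), zero_comp, assoc, ← this, assoc]
    obtain ⟨g, hg⟩ := Pretriangulated.Triangle.coyoneda_exact₂ T hT h₀ hcomp
    have hg0 : g = 0 := by
      apply hadj_zero' _ _
      have hz : ∀ hh : P ⟶ (L.obj ((HomotopyCategory.quotient 𝒜 (ComplexShape.up ℤ)).obj
          (strunc Y' (b + 1))))⟦l⟧, hh = 0 := by
        refine ih (strunc Y' (b + 1)) (b + 1) (fun j hj => strunc_isZero Y' (b + 1) j hj)
          (fun j hj => strunc_isZero' Y' (b + 1) j (hs2 j (by omega))) ?_ l hl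
        intro j l' hl' h'
        by_cases hbj : b + 1 ≤ j
        · refine hom_zero_of_iso (Iso.refl _)
            ((shiftFunctor DF l').mapIso (L.mapIso
              ((HomotopyCategory.quotient 𝒜 (ComplexShape.up ℤ)).mapIso
                ((CochainComplex.singleFunctor 𝒜 j).mapIso
                  (struncXIso Y' (b + 1) j hbj))))) ?_ h'
          exact hyp j l' hl'
        · exact ((shiftFunctor DF l').map_isZero (LQ_isZero L _
            ((CochainComplex.singleFunctor 𝒜 j).map_isZero
              (strunc_isZero Y' (b + 1) j (by omega))))).eq_of_tgt _ _
      rw [← cancel_mono (eqToHom (shift_eq T.obj₁)), zero_comp]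
      apply hz
    have hh₀ : h₀ = 0 := by rw [hg, hg0, zero_comp]
    have : h ≫ eqToHom (shift_eq T.obj₂).symm = 0 := by
      have := congrArg (adj.homEquiv P T.obj₂) (congrArg (fun z => z) hh₀)
      rw [Adjunction.homEquiv_unit] at this
      have h2 : adj.homEquiv P T.obj₂ h₀ = h ≫ eqToHom (shift_eq T.obj₂).symm :=
        (adj.homEquiv P T.obj₂).apply_symm_apply _
      erw [← h2, hh₀, Adjunction.homEquiv_unit, Functor.map_zero, comp_zero]
    erw [← cancel_mono (eqToHom (shift_eq T.obj₂).symm), zero_comp]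
    exact this

/-- Devissage in the first variable. -/
lemma xside (W : DF) (c : ℤ) (n : ℕ) :
    ∀ (X' : CochainComplex 𝒜 ℤ) (a : ℤ),
      (∀ i, i < a → IsZero (X'.X i)) → (∀ i, a + n ≤ i → IsZero (X'.X i)) →
      (∀ (i l : ℤ), c ≤ l →
        ∀ h : L.obj ((HomotopyCategory.quotient 𝒜 (ComplexShape.up ℤ)).obj
            ((CochainComplex.singleFunctor 𝒜 i).obj (X'.X i))) ⟶ W⟦l⟧, h = 0) →
      ∀ (l : ℤ), c ≤ l →
        ∀ h : L.obj ((HomotopyCategory.quotient 𝒜 (ComplexShape.up ℤ)).obj X') ⟶ W⟦l⟧,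
          h = 0 := by
  induction n with
  | zero =>
    intro X' a hs1 hs2 hyp l hl h
    refine (LQ_isZero L X' (isZero_of_components X' (fun i => ?_))).eq_of_src _ _
    rcases lt_or_ge i a with hi | hi
    · exact hs1 i hi
    · exact hs2 i (by omega)
  | succ n ih =>
    intro X' a hs1 hs2 hyp l hl h
    have hdist := (HomotopyCategory.distinguished_iff_iso_trianglehOfDegreewiseSplit _).2
      ⟨sesTrunc X' a hs1, sesTruncSplitting X' a hs1, ⟨Iso.refl _⟩⟩
    have hT := L.map_distinguished _ hdist
    set T := L.mapTriangle.obj (CochainComplex.trianglehOfDegreewiseSplit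
      (sesTrunc X' a hs1) (sesTruncSplitting X' a hs1)) with hTdef
    have hmor : T.mor₁ ≫ h = 0 := by
      refine ih (strunc X' (a + 1)) (a + 1) (fun i hi => strunc_isZero X' (a + 1) i hi)
        (fun i hi => strunc_isZero' X' (a + 1) i (hs2 i (by omega))) ?_ l hl _
      intro i l' hl' h'
      by_cases hai : a + 1 ≤ i
      · refine hom_zero_of_iso
          (L.mapIso ((HomotopyCategory.quotient 𝒜 (ComplexShape.up ℤ)).mapIso
            ((CochainComplex.singleFunctor 𝒜 i).mapIso
              (struncXIso X' (a + 1) i hai)))) (Iso.refl _) ?_ h'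
        exact fun h'' => hyp i l' hl' h''
      · exact ((LQ_isZero L _
          ((CochainComplex.singleFunctor 𝒜 i).map_isZero
            (strunc_isZero X' (a + 1) i (by omega))))).eq_of_src _ _
    obtain ⟨g, hg⟩ := Pretriangulated.Triangle.yoneda_exact₂ T hT h hmor
    erw [hg, hyp a l hl g, comp_zero]
    rfl

end Devissage

universe u₁ v₁ u₂ v₂ u₃ v₃

/-- If `X^i = 0` for `i < m`, `Y^j = 0` for `j > t` and `Ext^l_F(X^i, Y^j) = 0` for
`l ≥ d`, then `Hom_{D_F}(X^•, Y^•[l]) = 0` for `l ≥ d + t - m`. -/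
theorem statement16 {Λ : Type u} [Ring Λ] (F : ShortComplex (ModuleCat.{u} Λ) → Prop)
    (hSE : ∀ S, F S → S.ShortExact) (hEnough : HasEnoughFProjectives F)
    (N : Triangulated.Subcategory (HomotopyCategory (ModuleCat.{u} Λ) (ComplexShape.up ℤ)))
    (hN : ∀ Z : CochainComplex (ModuleCat.{u} Λ) ℤ,
      N.P ((HomotopyCategory.quotient _ _).obj Z) ↔ FAcyclic F Z)
    {DF : Type u₁} [Category.{v₁} DF] [HasZeroObject DF] [HasShift DF ℤ]
    [Preadditive DF] [∀ n : ℤ, (shiftFunctor DF n).Additive] [Pretriangulated DF]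
    (L : HomotopyCategory (ModuleCat.{u} Λ) (ComplexShape.up ℤ) ⥤ DF)
    [L.IsLocalization N.W] [L.CommShift ℤ] [L.IsTriangulated]
    (m t d : ℕ) (X Y : CochainComplex (ModuleCat.{u} Λ) ℤ)
    (hXb : Bounded X) (hYb : Bounded Y)
    (hX : ∀ i : ℤ, i < (m : ℤ) → IsZero (X.X i))
    (hY : ∀ j : ℤ, (t : ℤ) < j → IsZero (Y.X j))
    (hvan : ∀ (i j : ℤ) (l : ℕ), d ≤ l →
      ∀ h : L.obj ((HomotopyCategory.quotient _ _).obj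
          ((CochainComplex.singleFunctor (ModuleCat.{u} Λ) 0).obj (X.X i))) ⟶
        (L.obj ((HomotopyCategory.quotient _ _).obj
          ((CochainComplex.singleFunctor (ModuleCat.{u} Λ) 0).obj (Y.X j))))⟦(l : ℤ)⟧,
        h = 0) :
    ∀ l : ℤ, (d : ℤ) + (t : ℤ) - (m : ℤ) ≤ l →
      ∀ h : L.obj ((HomotopyCategory.quotient _ _).obj X) ⟶
          (L.obj ((HomotopyCategory.quotient _ _).obj Y))⟦l⟧,
        h = 0 := by
  intro l hl h
  obtain ⟨aX, bX, hXbd⟩ := hXb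
  obtain ⟨aY, bY, hYbd⟩ := hYb
  refine xside L (L.obj ((HomotopyCategory.quotient _ _).obj Y))
    ((d : ℤ) + (t : ℤ) - (m : ℤ)) (bX + 1 - (m : ℤ)).toNat X (m : ℤ) hX
    (fun i hi => hXbd i (Or.inr (by omega))) ?_ l hl h
  intro i l' hl'
  by_cases him : (m : ℤ) ≤ i
  · -- vanishing of `Hom(single₀(X.X i), (L Q Y)⟦l' + i⟧)` by devissage on `Y`
    have hy : ∀ g : L.obj ((HomotopyCategory.quotient _ _).obj
        ((CochainComplex.singleFunctor (ModuleCat.{u} Λ) 0).obj (X.X i))) ⟶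
        (L.obj ((HomotopyCategory.quotient _ _).obj Y))⟦l' + i⟧, g = 0 := by
      refine yside L _ ((d : ℤ) + (t : ℤ)) ((t : ℤ) + 1 - aY).toNat Y aY
        (fun j hj => hYbd j (Or.inl hj)) (fun j hj => hY j (by omega)) ?_
        (l' + i) (by omega)
      intro j l'' hl'' h''
      by_cases hjt : j ≤ (t : ℤ)
      · refine hom_zero_of_iso (Iso.refl _)
          ((shiftFunctor DF l'').mapIso (LQsingle L (Y.X j) j) ≪≫
            ((shiftFunctorAdd' DF (-j) l'' (((l'' - j).toNat : ℤ)) (by omega)).symm.app _))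
          ?_ h''
        exact fun g => hvan i j (l'' - j).toNat (by omega) g
      · exact ((shiftFunctor DF l'').map_isZero (LQ_isZero L _
          ((CochainComplex.singleFunctor (ModuleCat.{u} Λ) j).map_isZero
            (hY j (by omega))))).eq_of_tgt _ _
    intro h'
    refine hom_zero_of_iso (LQsingle L (X.X i) i) (Iso.refl _) ?_ h'
    refine hom_zero_of_shift i ?_
    exact hom_zero_of_iso ((shiftFunctorCompIsoId DF (-i) i (by omega)).app _)
      ((shiftFunctorAdd' DF l' i (l' + i) rfl).symm.app _) hy
  · exact fun h' => (LQ_isZero L _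
      ((CochainComplex.singleFunctor (ModuleCat.{u} Λ) i).map_isZero
        (hX i (by omega)))).eq_of_src _ _

end RelDer
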